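/- Let M be a compact metric space equipped with a continuous flow φ, and let f₀ : M → ℝ/ℤ be a continuous map not homotopic to a constant map. Then there exists a countable (possibly empty) family of level-set cross-sections for f₀ such that every level-set cross-section for f₀ is isotopic along the flow to a member of the family. In other words, the set of partial cross-sections cohomologous to α = [f₀], considered up to isotopy along the flow, is at most countable. -/

import Mathlib

/-- The ℤ-cover of `M` associated with a circle-valued map `f₀`:
`N = {(x,t) ∈ M × ℝ : f₀ x = t mod 1}`, with the subspace topology. -/
abbrev ZCover {M : Type*} [MetricSpace M] (f₀ : M → AddCircle (1:ℝ)) : Type _ :=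
  {p : M × ℝ // f₀ p.1 = (p.2 : AddCircle (1:ℝ))}

/-- The covering projection `π : N → M`. -/
def zProj {M : Type*} [MetricSpace M] (f₀ : M → AddCircle (1:ℝ)) : ZCover f₀ → M :=
  fun y => y.val.1

/-- The deck transformation `T : N → N`, `(x,t) ↦ (x, t+1)`. -/
def zDeck {M : Type*} [MetricSpace M] (f₀ : M → AddCircle (1:ℝ)) : ZCover f₀ → ZCover f₀ :=
  fun y => ⟨(y.val.1, y.val.2 + 1), by
    have h := y.prop
    simpa [AddCircle.coe_add_period 1 y.val.2] using h⟩

/-- A level-set cross-section for `f₀`: the injective image in `M` of a level set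
`F⁻¹ {c}` of a continuous ℤ-equivariant function `F` on the ℤ-cover which is
strictly increasing along the lifted flow `ψ` on an open set containing the level set. -/
def IsLevelSetCS {M : Type*} [MetricSpace M] (f₀ : M → AddCircle (1:ℝ))
    (ψ : ℝ → ZCover f₀ → ZCover f₀) (S : Set M) : Prop :=
  ∃ (F : ZCover f₀ → ℝ) (c : ℝ) (U : Set (ZCover f₀)),
    Continuous F ∧ (∀ y, F (zDeck f₀ y) = F y + 1) ∧
    (F ⁻¹' {c}).Nonempty ∧ IsOpen U ∧ F ⁻¹' {c} ⊆ U ∧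
    (∀ (y : ZCover f₀) (s s' : ℝ), s < s' → (∀ u ∈ Set.Icc s s', ψ u y ∈ U) →
      F (ψ s y) < F (ψ s' y)) ∧
    S = zProj f₀ '' (F ⁻¹' {c})

/-- `S` is topologically transverse to the flow `φ`: every point of `S` has a
neighborhood `V ∩ S` in `S` and a time `t > 0` such that an orbit segment of length
`≤ t` starting in `V ∩ S` returns to `V ∩ S` only at time `0`. -/
def TopTransverse {M : Type*} [TopologicalSpace M] (φ : ℝ → M → M) (S : Set M) : Prop :=
  ∀ x ∈ S, ∃ t : ℝ, 0 < t ∧ ∃ V : Set M, IsOpen V ∧ x ∈ V ∧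
    ∀ y ∈ V ∩ S, ∀ s ∈ Set.Icc (-t) t, φ s y ∈ V ∩ S → s = 0

/-- `S` and `S'` are isotopic along the flow `φ`: there is a continuous family
`θ : [0,1] × S → ℝ` with `θ 0 = 0` such that each `x ↦ φ (θ t x) x` is injective on `S`
with topologically transverse image, the image at time `1` being `S'`. -/
def IsotopicAlongFlow {M : Type*} [TopologicalSpace M] (φ : ℝ → M → M) (S S' : Set M) : Prop :=
  ∃ θ : ℝ → M → ℝ,
    ContinuousOn (fun p : ℝ × M => θ p.1 p.2) (Set.Icc (0:ℝ) 1 ×ˢ S) ∧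
    (∀ x ∈ S, θ 0 x = 0) ∧
    (∀ t ∈ Set.Icc (0:ℝ) 1,
      Set.InjOn (fun x => φ (θ t x) x) S ∧
      TopTransverse φ ((fun x => φ (θ t x) x) '' S)) ∧
    (fun x => φ (θ 1 x) x) '' S = S'

section Basic
variable {M : Type*} [MetricSpace M] [CompactSpace M] {f₀ : M → AddCircle (1:ℝ)}

-- membership in N


lemma coe_eq_coe_iff {s t : ℝ} :
    (s : AddCircle (1:ℝ)) = (t : AddCircle (1:ℝ)) ↔ ∃ k : ℤ, s = t + k := by
  rw [show ((s : AddCircle (1:ℝ)) = (t:AddCircle (1:ℝ))) ↔ _ from QuotientAddGroup.eq_iff_sub_mem]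
  constructor
  · rintro h
    rcases AddSubgroup.mem_zmultiples_iff.1 h with ⟨k, hk⟩
    exact ⟨k, by rw [zsmul_eq_mul, mul_one] at hk; linarith⟩
  · rintro ⟨k, rfl⟩
    exact AddSubgroup.mem_zmultiples_iff.2 ⟨k, by rw [zsmul_eq_mul, mul_one]; ring⟩

lemma zcover_closed (hf₀ : Continuous f₀) :
    IsClosed {p : M × ℝ | f₀ p.1 = (p.2 : AddCircle (1:ℝ))} :=
  isClosed_eq (hf₀.comp continuous_fst) (continuous_quotient_mk'.comp continuous_snd)

-- compactness criterion
lemma isCompact_of_bddSnd (hf₀ : Continuous f₀) {C : Set (ZCover f₀)}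
    (hC : IsClosed C) (B : ℝ) (hB : ∀ z ∈ C, |z.val.2| ≤ B) : IsCompact C := by
  rw [Subtype.isCompact_iff]
  have hsub : (Subtype.val '' C : Set (M × ℝ)) ⊆ Set.univ ×ˢ Set.Icc (-B) B := by
    rintro p ⟨z, hz, rfl⟩
    exact ⟨trivial, abs_le.1 (hB z hz)⟩
  refine IsCompact.of_isClosed_subset (isCompact_univ.prod isCompact_Icc) ?_ hsub
  exact ((zcover_closed hf₀).isClosedEmbedding_subtypeVal).isClosed_iff_image_isClosed.1 hC

end Basic

section Shift
variable {M : Type*} [MetricSpace M] {f₀ : M → AddCircle (1:ℝ)}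

/-- shift a point of the cover by an integer -/
def shiftZ (u : ZCover f₀) (k : ℤ) : ZCover f₀ :=
  ⟨(u.val.1, u.val.2 + k), by
    rw [u.prop]
    exact (coe_eq_coe_iff.2 ⟨k, rfl⟩).symm⟩

variable {F : ZCover f₀ → ℝ} (hF1 : ∀ y, F (zDeck f₀ y) = F y + 1)

include hF1 in
lemma F_shiftZ (u : ZCover f₀) (k : ℤ) : F (shiftZ u k) = F u + k := by
  induction k using Int.induction_on with
  | zero =>
    have : shiftZ u 0 = u := Subtype.ext (by simp [shiftZ])
    rw [this]; simp
  | succ k ih =>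
    have he : shiftZ u (k+1) = zDeck f₀ (shiftZ u k) := Subtype.ext (by
      simp [shiftZ, zDeck]; push_cast; ring)
    rw [he, hF1, ih]; push_cast; ring
  | pred k ih =>
    have he : shiftZ u (-k) = zDeck f₀ (shiftZ u (-k-1)) := Subtype.ext (by
      simp [shiftZ, zDeck]; push_cast; ring)
    rw [he, hF1] at ih
    push_cast at ih ⊢
    linarith

include hF1 in
lemma F_of_eq_proj {u v : ZCover f₀} (h : zProj f₀ u = zProj f₀ v) :
    ∃ k : ℤ, F v = F u + k := by
  have h1 : f₀ u.val.1 = (u.val.2 : AddCircle (1:ℝ)) := u.prop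
  have h2 : f₀ v.val.1 = (v.val.2 : AddCircle (1:ℝ)) := v.prop
  have hx : u.val.1 = v.val.1 := h
  rw [hx, h2] at h1
  rcases coe_eq_coe_iff.1 h1 with ⟨k, hk⟩
  have : v = shiftZ u k := Subtype.ext (by
    ext
    · exact hx.symm
    · simpa [shiftZ] using hk)
  rw [this, F_shiftZ hF1]
  exact ⟨k, rfl⟩

include hF1 in
lemma mem_proj_level {c : ℝ} (z : ZCover f₀) :
    zProj f₀ z ∈ zProj f₀ '' (F ⁻¹' {c}) ↔ ∃ k : ℤ, F z = c + k := by
  constructor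
  · rintro ⟨w, (hw : F w = c), hπ⟩
    rcases F_of_eq_proj hF1 (u := w) (v := z) hπ with ⟨k, hk⟩
    exact ⟨k, by rw [hk, hw]⟩
  · rintro ⟨k, hk⟩
    refine ⟨shiftZ z (-k), ?_, rfl⟩
    simp only [Set.mem_preimage, Set.mem_singleton_iff, F_shiftZ hF1, hk]
    push_cast; ring

end Shift

section OpenMap
variable {M : Type*} [MetricSpace M] {f₀ : M → AddCircle (1:ℝ)}

lemma exists_rep_close (u : AddCircle (1:ℝ)) (t : ℝ) :
    ∃ t' : ℝ, (t' : AddCircle (1:ℝ)) = u ∧ |t' - t| = dist u ((t : AddCircle (1:ℝ))) := by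
  obtain ⟨s, rfl⟩ : ∃ s : ℝ, (s : AddCircle (1:ℝ)) = u := Quotient.exists_rep u
  refine ⟨s - round (s - t), ?_, ?_⟩
  · exact coe_eq_coe_iff.2 ⟨-round (s - t), by push_cast; ring⟩
  · have h1 : ((s : AddCircle (1:ℝ))) - ((t : AddCircle (1:ℝ))) = ((s - t : ℝ) : AddCircle (1:ℝ)) :=
      (QuotientAddGroup.mk_sub _ s t).symm
    rw [dist_eq_norm, h1, AddCircle.norm_eq]
    rw [show (1:ℝ)⁻¹ * (s - t) = s - t by ring, mul_one]
    congr 1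
    ring

lemma zProj_isOpenMap (hf₀ : Continuous f₀) : IsOpenMap (zProj f₀) := by
  intro V hV
  rw [Metric.isOpen_iff]
  rintro x ⟨z, hzV, rfl⟩
  rcases Metric.isOpen_iff.1 hV z hzV with ⟨ε, hε, hball⟩
  rcases Metric.continuousAt_iff.1 (hf₀.continuousAt (x := z.val.1)) (ε/2) (by linarith) with
    ⟨ρ, hρ, hcont⟩
  refine ⟨min ρ (ε/2), by positivity, ?_⟩
  intro x' hx'
  rw [Metric.mem_ball] at hx'
  have hd1 : dist x' z.val.1 < ρ := lt_of_lt_of_le hx' (min_le_left _ _)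
  have hd2 : dist (f₀ x') (f₀ z.val.1) < ε/2 := hcont hd1
  obtain ⟨t', ht'c, ht'd⟩ := exists_rep_close (f₀ x') z.val.2
  have hz2 : f₀ z.val.1 = (z.val.2 : AddCircle (1:ℝ)) := z.prop
  have ht'lt : |t' - z.val.2| < ε/2 := by rw [ht'd, ← hz2]; exact hd2
  have hz' : (⟨(x', t'), ht'c.symm⟩ : ZCover f₀) ∈ V := by
    apply hball
    rw [Metric.mem_ball, Subtype.dist_eq, Prod.dist_eq]
    apply max_lt
    · exact lt_of_lt_of_le hx' (le_trans (min_le_right _ _) (by linarith))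
    · rw [Real.dist_eq]; linarith
  exact ⟨⟨(x', t'), ht'c.symm⟩, hz', rfl⟩

end OpenMap

/-- A package of data and quantitative properties for a level-set cross-section. -/
structure CSData {M : Type*} [MetricSpace M] (f₀ : M → AddCircle (1:ℝ))
    (ψ : ℝ → ZCover f₀ → ZCover f₀) (S : Set M) where
  F : ZCover f₀ → ℝ
  c : ℝ
  a : ℝ
  δ0 : ℝ
  δη : ℝ → ℝ
  eps : ℝ → ℝ
  K : Set (ZCover f₀)
  ha : 0 < a
  hδ0 : 0 < δ0
  hSK : S = zProj f₀ '' K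
  hKF : K = F ⁻¹' {c}
  hSne : S.Nonempty
  hScomp : IsCompact S
  mem : ∀ z : ZCover f₀, zProj f₀ z ∈ S ↔ ∃ k : ℤ, F z = c + k
  hit : ∀ z : ZCover f₀, Metric.infDist z K ≤ δ0 → ∀ r₁ r₂ : ℝ, |r₁| ≤ 3*a → |r₂| ≤ 3*a →
    (∃ k : ℤ, F (ψ r₁ z) = c + k) → (∃ k : ℤ, F (ψ r₂ z) = c + k) → r₁ = r₂
  hδη : ∀ η : ℝ, 0 < η → η ≤ a → 0 < δη η ∧ δη η ≤ δ0
  cross : ∀ η : ℝ, 0 < η → η ≤ a → ∀ z : ZCover f₀, Metric.infDist z K < δη η →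
    ∃ s : ℝ, |s| ≤ η ∧ F (ψ s z) = c
  heps : ∀ η : ℝ, 0 < η → η ≤ a → 0 < eps η
  hnear : ∀ η : ℝ, 0 < η → η ≤ a → ∀ x x' : M, x' ∈ S → dist x x' < eps η →
    ∃ z : ZCover f₀, zProj f₀ z = x ∧ Metric.infDist z K < δη η

section Exist
variable {M : Type*} [MetricSpace M] [CompactSpace M]
variable {f₀ : M → AddCircle (1:ℝ)} (hf₀ : Continuous f₀)
variable {ψ : ℝ → ZCover f₀ → ZCover f₀}
  (hψc : Continuous fun p : ℝ × ZCover f₀ => ψ p.1 p.2)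
  (hψ0 : ∀ y : ZCover f₀, ψ 0 y = y)

include hf₀ hψc hψ0 in
lemma exists_csdata {S : Set M} (h : IsLevelSetCS f₀ ψ S) : Nonempty (CSData f₀ ψ S) := by
  obtain ⟨F, c, U, hFc, hF1, hKne, hUo, hKU, hmono, hSdef⟩ := h
  set K : Set (ZCover f₀) := F ⁻¹' {c} with hK
  -- K is compact
  have hKcl : IsClosed K := (isClosed_singleton).preimage hFc
  have hKcomp : IsCompact K := by
    have hQcl : IsClosed {z : ZCover f₀ | z.val.2 ∈ Set.Icc (0:ℝ) 1} :=
      isClosed_Icc.preimage ((continuous_subtype_val).snd)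
    have hQcomp : IsCompact {z : ZCover f₀ | z.val.2 ∈ Set.Icc (0:ℝ) 1} :=
      isCompact_of_bddSnd hf₀ hQcl 1 (by
        rintro z ⟨h0, h1⟩
        rw [abs_le]; constructor <;> linarith)
    obtain ⟨C, hC⟩ := hQcomp.exists_bound_of_continuousOn
      ((hFc.sub ((continuous_subtype_val).snd)).continuousOn)
    have hCg : ∀ z : ZCover f₀, |F z - z.val.2| ≤ C := by
      intro z
      set w := shiftZ z (-⌊z.val.2⌋) with hw
      have hw2 : w.val.2 = Int.fract z.val.2 := by
        show z.val.2 + ((-⌊z.val.2⌋ : ℤ) : ℝ) = Int.fract z.val.2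
        rw [Int.fract]; push_cast; ring
      have hwQ : w ∈ {z : ZCover f₀ | z.val.2 ∈ Set.Icc (0:ℝ) 1} := by
        rw [Set.mem_setOf_eq, hw2]
        exact ⟨Int.fract_nonneg _, (Int.fract_lt_one _).le⟩
      have hFw : F w = F z + (-⌊z.val.2⌋ : ℤ) := F_shiftZ hF1 z _
      have := hC w hwQ
      simp only [Pi.sub_apply] at this
      rw [Real.norm_eq_abs, hFw, hw2] at this
      have heq : F z + ((-⌊z.val.2⌋ : ℤ) : ℝ) - Int.fract z.val.2 = F z - z.val.2 := by
        rw [Int.fract]; push_cast; ring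
      rwa [heq] at this
    apply isCompact_of_bddSnd hf₀ hKcl (C + |c|)
    intro z hz
    have hFz : F z = c := hz
    calc |z.val.2| = |(F z - z.val.2) - F z| := by rw [abs_sub_comm]; congr 1; ring
    _ ≤ |F z - z.val.2| + |F z| := abs_sub _ _
    _ ≤ C + |c| := add_le_add (hCg z) (by rw [hFz])
  -- S basics
  have hπc : Continuous (zProj f₀) := (continuous_subtype_val).fst
  have hScomp : IsCompact S := hSdef ▸ (hKcomp.image hπc)
  have hSne : S.Nonempty := hSdef ▸ hKne.image _
  have hmem : ∀ z : ZCover f₀, zProj f₀ z ∈ S ↔ ∃ k : ℤ, F z = c + k := by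
    intro z; rw [hSdef]; exact mem_proj_level hF1 z
  -- the continuous map (s, z) ↦ ψ s z and F ∘ it
  have hΨc : Continuous fun p : ℝ × ZCover f₀ => F (ψ p.1 p.2) := hFc.comp hψc
  -- choose a and δ0
  obtain ⟨a, δ0, ha, hδ0, hW⟩ :
      ∃ a δ0 : ℝ, 0 < a ∧ 0 < δ0 ∧ ∀ s : ℝ, ∀ z : ZCover f₀, |s| ≤ 3*a →
        Metric.infDist z K ≤ δ0 → (ψ s z ∈ U ∧ |F (ψ s z) - c| < 1/2) := by
    have hO₁ : IsOpen {p : ℝ × ZCover f₀ | ψ p.1 p.2 ∈ U ∧ |F (ψ p.1 p.2) - c| < 1/2} := by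
      apply IsOpen.inter (hUo.preimage hψc)
      exact isOpen_Iio.preimage ((hΨc.sub continuous_const).abs)
    have hcpt : IsCompact (({0} : Set ℝ) ×ˢ K) := isCompact_singleton.prod hKcomp
    have hsub : (({0} : Set ℝ) ×ˢ K) ⊆
        {p : ℝ × ZCover f₀ | ψ p.1 p.2 ∈ U ∧ |F (ψ p.1 p.2) - c| < 1/2} := by
      rintro ⟨s, z⟩ ⟨hs, hz⟩
      simp only [Set.mem_singleton_iff] at hs
      subst hs
      have hFz : F z = c := hz
      refine ⟨?_, ?_⟩
      · simp only [hψ0]; exact hKU hz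
      · simp only [hψ0, hFz]; norm_num
    obtain ⟨θ, hθ, hthick⟩ := hcpt.exists_thickening_subset_open hO₁ hsub
    refine ⟨θ/4, θ/2, by linarith, by linarith, ?_⟩
    intro s z hs hz
    obtain ⟨y, hyK, hyd⟩ := hKcomp.exists_infDist_eq_dist hKne z
    have : (s, z) ∈ Metric.thickening θ (({0} : Set ℝ) ×ˢ K) := by
      rw [Metric.mem_thickening_iff]
      refine ⟨(0, y), ⟨rfl, hyK⟩, ?_⟩
      rw [Prod.dist_eq]
      apply max_lt
      · rw [Real.dist_eq, sub_zero]; linarith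
      · rw [← hyd]; linarith
    exact hthick this
  -- the `hit` property
  have hhit : ∀ z : ZCover f₀, Metric.infDist z K ≤ δ0 → ∀ r₁ r₂ : ℝ, |r₁| ≤ 3*a → |r₂| ≤ 3*a →
      (∃ k : ℤ, F (ψ r₁ z) = c + k) → (∃ k : ℤ, F (ψ r₂ z) = c + k) → r₁ = r₂ := by
    intro z hz r₁ r₂ h1 h2 hk1 hk2
    have hval : ∀ r : ℝ, |r| ≤ 3*a → (∃ k : ℤ, F (ψ r z) = c + k) → F (ψ r z) = c := by
      rintro r hr ⟨k, hk⟩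
      have hb := (hW r z hr hz).2
      rw [hk] at hb
      have hb' : |(k : ℝ)| < 1/2 := by
        rw [show c + (k:ℝ) - c = (k:ℝ) by ring] at hb; exact hb
      have hk0 : k = 0 := by
        by_contra hne
        have := Int.one_le_abs hne
        have : (1 : ℝ) ≤ |(k : ℝ)| := by
          rw [← Int.cast_abs]; exact_mod_cast this
        linarith
      rw [hk, hk0]; norm_num
    have hv1 := hval r₁ h1 hk1
    have hv2 := hval r₂ h2 hk2
    have hseg : ∀ r₁' r₂' : ℝ, |r₁'| ≤ 3*a → |r₂'| ≤ 3*a → r₁' < r₂' →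
        F (ψ r₁' z) < F (ψ r₂' z) := by
      intro r₁' r₂' hb1 hb2 hlt
      apply hmono z r₁' r₂' hlt
      intro u hu
      have : |u| ≤ 3*a := by
        rw [abs_le] at hb1 hb2 ⊢
        exact ⟨le_trans hb1.1 hu.1, le_trans hu.2 hb2.2⟩
      exact (hW u z this hz).1
    rcases lt_trichotomy r₁ r₂ with hlt | heq | hlt
    · exact absurd (hseg r₁ r₂ h1 h2 hlt) (by rw [hv1, hv2]; exact lt_irrefl c)
    · exact heq
    · exact absurd (hseg r₂ r₁ h2 h1 hlt) (by rw [hv1, hv2]; exact lt_irrefl c)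
  -- choose δη and cross
  have hδsel : ∀ η : ℝ, 0 < η → η ≤ a → ∃ δ : ℝ, 0 < δ ∧ δ ≤ δ0 ∧
      ∀ z : ZCover f₀, Metric.infDist z K < δ → ∃ s : ℝ, |s| ≤ η ∧ F (ψ s z) = c := by
    intro η hη hηa
    have hcη : Continuous fun z : ZCover f₀ => F (ψ η z) :=
      hΨc.comp (continuous_const.prodMk continuous_id)
    have hcη' : Continuous fun z : ZCover f₀ => F (ψ (-η) z) :=
      hΨc.comp (continuous_const.prodMk continuous_id)
    have hO₂ : IsOpen {z : ZCover f₀ | c < F (ψ η z) ∧ F (ψ (-η) z) < c} :=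
      IsOpen.inter (isOpen_lt continuous_const hcη) (isOpen_lt hcη' continuous_const)
    have hsub : K ⊆ {z : ZCover f₀ | c < F (ψ η z) ∧ F (ψ (-η) z) < c} := by
      intro y hy
      have hFz : F y = c := hy
      have hinf : Metric.infDist y K ≤ δ0 := by
        rw [Metric.infDist_zero_of_mem hy]; exact hδ0.le
      have habs : ∀ u : ℝ, u ∈ Set.Icc (-η) η → |u| ≤ 3*a := by
        intro u hu
        rw [abs_le]
        constructor <;> [linarith [hu.1]; linarith [hu.2]]
      constructor
      · have := hmono y 0 η hη (fun u hu => (hW u y (habs u ⟨by linarith [hu.1], hu.2⟩) hinf).1)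
        rwa [hψ0, hFz] at this
      · have := hmono y (-η) 0 (by linarith) (fun u hu =>
          (hW u y (habs u ⟨hu.1, by linarith [hu.2]⟩) hinf).1)
        rwa [hψ0, hFz] at this
    obtain ⟨δ', hδ', hthick⟩ := hKcomp.exists_thickening_subset_open hO₂ hsub
    refine ⟨min δ' δ0, lt_min hδ' hδ0, min_le_right _ _, ?_⟩
    intro z hzd
    obtain ⟨y, hyK, hyd⟩ := hKcomp.exists_infDist_eq_dist hKne z
    have hzO₂ : z ∈ {z : ZCover f₀ | c < F (ψ η z) ∧ F (ψ (-η) z) < c} := by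
      apply hthick
      rw [Metric.mem_thickening_iff]
      exact ⟨y, hyK, by rw [← hyd]; exact lt_of_lt_of_le hzd (min_le_left _ _)⟩
    have hgc : ContinuousOn (fun s : ℝ => F (ψ s z)) (Set.Icc (-η) η) :=
      (hΨc.comp (continuous_id.prodMk continuous_const)).continuousOn
    have hIV := intermediate_value_Icc (by linarith : (-η : ℝ) ≤ η) hgc
    have hc : c ∈ Set.Icc (F (ψ (-η) z)) (F (ψ η z)) := ⟨hzO₂.2.le, hzO₂.1.le⟩
    obtain ⟨s, hs, hgs⟩ := hIV hc
    exact ⟨s, abs_le.2 ⟨hs.1, hs.2⟩, hgs⟩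
  classical
  set δη : ℝ → ℝ := fun η => if h : 0 < η ∧ η ≤ a then (hδsel η h.1 h.2).choose else 1 with hδηdef
  have hδη : ∀ η : ℝ, 0 < η → η ≤ a → 0 < δη η ∧ δη η ≤ δ0 := by
    intro η h1 h2
    simp only [hδηdef, dif_pos (⟨h1, h2⟩ : 0 < η ∧ η ≤ a)]
    exact ⟨(hδsel η h1 h2).choose_spec.1, (hδsel η h1 h2).choose_spec.2.1⟩
  have hcross : ∀ η : ℝ, 0 < η → η ≤ a → ∀ z : ZCover f₀, Metric.infDist z K < δη η →
      ∃ s : ℝ, |s| ≤ η ∧ F (ψ s z) = c := by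
    intro η h1 h2
    simp only [hδηdef, dif_pos (⟨h1, h2⟩ : 0 < η ∧ η ≤ a)]
    exact (hδsel η h1 h2).choose_spec.2.2
  -- choose eps
  have hepssel : ∀ η : ℝ, 0 < η → η ≤ a → ∃ e : ℝ, 0 < e ∧
      ∀ x x' : M, x' ∈ S → dist x x' < e →
        ∃ z : ZCover f₀, zProj f₀ z = x ∧ Metric.infDist z K < δη η := by
    intro η hη hηa
    have hO₃ : IsOpen {z : ZCover f₀ | Metric.infDist z K < δη η} :=
      isOpen_lt (Metric.continuous_infDist_pt K) continuous_const
    have hΩ : IsOpen (zProj f₀ '' {z : ZCover f₀ | Metric.infDist z K < δη η}) :=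
      zProj_isOpenMap hf₀ _ hO₃
    have hSsub : S ⊆ zProj f₀ '' {z : ZCover f₀ | Metric.infDist z K < δη η} := by
      rw [hSdef]
      rintro x ⟨w, hwK, rfl⟩
      refine ⟨w, ?_, rfl⟩
      rw [Set.mem_setOf_eq, Metric.infDist_zero_of_mem hwK]
      exact (hδη η hη hηa).1
    obtain ⟨e, he, hthick⟩ := hScomp.exists_thickening_subset_open hΩ hSsub
    refine ⟨e, he, ?_⟩
    intro x x' hx' hd
    have : x ∈ Metric.thickening e S := Metric.mem_thickening_iff.2 ⟨x', hx', hd⟩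
    obtain ⟨z, hzO, hzx⟩ := hthick this
    exact ⟨z, hzx, hzO⟩
  set eps : ℝ → ℝ := fun η => if h : 0 < η ∧ η ≤ a then (hepssel η h.1 h.2).choose else 1
    with hepsdef
  refine ⟨⟨F, c, a, δ0, δη, eps, K, ha, hδ0, hSdef, hK, hSne, hScomp, hmem, hhit, hδη, hcross,
    ?_, ?_⟩⟩
  · intro η h1 h2
    simp only [hepsdef, dif_pos (⟨h1, h2⟩ : 0 < η ∧ η ≤ a)]
    exact (hepssel η h1 h2).choose_spec.1
  · intro η h1 h2
    simp only [hepsdef, dif_pos (⟨h1, h2⟩ : 0 < η ∧ η ≤ a)]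
    exact (hepssel η h1 h2).choose_spec.2

end Exist

section Iso
variable {M : Type*} [MetricSpace M] [CompactSpace M]
variable {f₀ : M → AddCircle (1:ℝ)}
variable {φ : ℝ → M → M} {ψ : ℝ → ZCover f₀ → ZCover f₀}

lemma iso_of_close
    (hφc : Continuous fun p : ℝ × M => φ p.1 p.2)
    (hφ0 : ∀ x : M, φ 0 x = x)
    (hφadd : ∀ (s t : ℝ) (x : M), φ (s + t) x = φ s (φ t x))
    (hψ0 : ∀ y : ZCover f₀, ψ 0 y = y)
    (hlift : ∀ (s : ℝ) (y : ZCover f₀), zProj f₀ (ψ s y) = φ s (zProj f₀ y))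
    {S S' : Set M} (P : CSData f₀ ψ S) (P' : CSData f₀ ψ S')
    (η : ℝ) (hη : 0 < η) (hηa : η ≤ P.a) (hηa' : η ≤ P'.a)
    (h1 : ∀ x ∈ S, ∃ x' ∈ S', dist x x' < P'.eps η)
    (h2 : ∀ x' ∈ S', ∃ x ∈ S, dist x' x < P.eps η) :
    IsotopicAlongFlow φ S S' := by
  classical
  have hflow : ∀ (s t : ℝ) (x : M), φ s (φ t x) = φ (s + t) x := fun s t x => (hφadd s t x).symm
  have hcancel : ∀ (s : ℝ) (x : M), φ (-s) (φ s x) = x := by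
    intro s x; rw [hflow]; simp [hφ0]
  have hmem' : ∀ (z : ZCover f₀) (s : ℝ),
      φ s (zProj f₀ z) ∈ S' ↔ ∃ k : ℤ, P'.F (ψ s z) = P'.c + k := by
    intro z s; rw [← hlift]; exact P'.mem (ψ s z)
  have hmemP : ∀ (z : ZCover f₀) (s : ℝ),
      φ s (zProj f₀ z) ∈ S ↔ ∃ k : ℤ, P.F (ψ s z) = P.c + k := by
    intro z s; rw [← hlift]; exact P.mem (ψ s z)
  have hex : ∀ x ∈ S, ∃ s : ℝ, |s| ≤ η ∧ φ s x ∈ S' := by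
    intro x hx
    obtain ⟨x', hx', hd⟩ := h1 x hx
    obtain ⟨z, hz, hznear⟩ := P'.hnear η hη hηa' x x' hx' hd
    obtain ⟨s, hsb, hFs⟩ := P'.cross η hη hηa' z hznear
    refine ⟨s, hsb, ?_⟩
    rw [← hz]
    exact (hmem' z s).2 ⟨0, by rw [hFs]; norm_num⟩
  have huniq : ∀ x ∈ S, ∀ s₁ s₂ : ℝ, |s₁| ≤ η → |s₂| ≤ η →
      φ s₁ x ∈ S' → φ s₂ x ∈ S' → s₁ = s₂ := by
    intro x hx s₁ s₂ hb₁ hb₂ hm₁ hm₂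
    obtain ⟨x', hx', hd⟩ := h1 x hx
    obtain ⟨z, hz, hznear⟩ := P'.hnear η hη hηa' x x' hx' hd
    have hzd : Metric.infDist z P'.K ≤ P'.δ0 :=
      le_of_lt (lt_of_lt_of_le hznear (P'.hδη η hη hηa').2)
    have h3a : ∀ s : ℝ, |s| ≤ η → |s| ≤ 3 * P'.a := fun s hs =>
      le_trans hs (by nlinarith [P'.ha])
    exact P'.hit z hzd s₁ s₂ (h3a _ hb₁) (h3a _ hb₂)
      ((hmem' z s₁).1 (by rwa [hz])) ((hmem' z s₂).1 (by rwa [hz]))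
  have huniqS : ∀ x ∈ S, ∀ r : ℝ, |r| ≤ 3*η → φ r x ∈ S → r = 0 := by
    intro x hx r hr hm
    have hx' : x ∈ zProj f₀ '' P.K := by rwa [← P.hSK]
    obtain ⟨w, hwK, hwx⟩ := hx'
    have hFw : P.F w = P.c := by rw [P.hKF] at hwK; exact hwK
    have hzd : Metric.infDist w P.K ≤ P.δ0 := by
      rw [Metric.infDist_zero_of_mem hwK]; exact P.hδ0.le
    have h3a : |r| ≤ 3 * P.a := le_trans hr (by nlinarith [P.ha])
    refine P.hit w hzd r 0 h3a (by rw [abs_zero]; nlinarith [P.ha]) ?_ ?_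
    · exact (hmemP w r).1 (by rwa [hwx])
    · exact ⟨0, by rw [hψ0, hFw]; norm_num⟩
  -- the hitting-time function
  set τ : M → ℝ := fun x => if h : ∃ s : ℝ, |s| ≤ η ∧ φ s x ∈ S' then h.choose else 0 with hτdef
  have hτ1 : ∀ x ∈ S, |τ x| ≤ η ∧ φ (τ x) x ∈ S' := by
    intro x hx
    have h := hex x hx
    simp only [hτdef, dif_pos h]
    exact h.choose_spec
  have hτu : ∀ x ∈ S, ∀ s : ℝ, |s| ≤ η → φ s x ∈ S' → s = τ x := fun x hx s hs hm =>
    huniq x hx s (τ x) hs (hτ1 x hx).1 hm (hτ1 x hx).2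
  -- continuity of τ on S
  have hτcont : ContinuousOn τ S := by
    intro x hx
    rw [Metric.continuousWithinAt_iff]
    by_contra hcon
    push_neg at hcon
    obtain ⟨ε, hε, hcon⟩ := hcon
    choose y hyS hyd hyε using fun n : ℕ => hcon (1/(n+1)) (by positivity)
    have hyb : ∀ n, τ (y n) ∈ Set.Icc (-η) η := fun n => abs_le.1 (hτ1 (y n) (hyS n)).1
    obtain ⟨sinf, hsinf, g, hg, hconv⟩ := (isCompact_Icc (a := -η) (b := η)).tendsto_subseq hyb
    have hyx : Filter.Tendsto (fun n => y (g n)) Filter.atTop (nhds x) := by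
      rw [tendsto_iff_dist_tendsto_zero]
      have hub : ∀ n : ℕ, dist (y (g n)) x ≤ 1/(n+1) := by
        intro n
        refine le_trans (hyd (g n)).le ?_
        apply one_div_le_one_div_of_le (by positivity)
        have hle : n ≤ g n := hg.le_apply
        have : (n:ℝ) ≤ (g n : ℝ) := Nat.cast_le.2 hle
        linarith
      exact squeeze_zero (fun n => dist_nonneg) hub tendsto_one_div_add_atTop_nhds_zero_nat
    have hmeminf : φ sinf x ∈ S' := by
      have htend : Filter.Tendsto (fun n => φ (τ (y (g n))) (y (g n))) Filter.atTop
          (nhds (φ sinf x)) := by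
        have hp : Filter.Tendsto (fun n => (τ (y (g n)), y (g n))) Filter.atTop
            (nhds (sinf, x)) := hconv.prodMk_nhds hyx
        exact (hφc.tendsto (sinf, x)).comp hp
      exact (P'.hScomp.isClosed).mem_of_tendsto htend
        (Filter.Eventually.of_forall fun n => (hτ1 _ (hyS (g n))).2)
    have hsinfτ : sinf = τ x := hτu x hx sinf (abs_le.2 hsinf) hmeminf
    have hdist : Filter.Tendsto (fun n => dist (τ (y (g n))) (τ x)) Filter.atTop (nhds 0) := by
      rw [← hsinfτ]
      exact tendsto_iff_dist_tendsto_zero.1 hconv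
    obtain ⟨n, hn⟩ := (hdist.eventually (gt_mem_nhds hε)).exists
    exact absurd hn (not_lt.2 (hyε (g n)))
  -- assemble the isotopy
  refine ⟨fun t x => t * τ x, ?_, ?_, ?_, ?_⟩
  · exact (continuous_fst.continuousOn).mul
      (hτcont.comp continuous_snd.continuousOn (fun p hp => hp.2))
  · intro x _; exact zero_mul _
  · intro t ht
    have hbb : ∀ x ∈ S, |t * τ x| ≤ η := by
      intro x hx
      rw [abs_mul]
      calc |t| * |τ x| ≤ 1 * η := by
            apply mul_le_mul (abs_le.2 ⟨by linarith [ht.1], ht.2⟩) (hτ1 x hx).1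
              (abs_nonneg _) zero_le_one
      _ = η := one_mul η
    constructor
    · intro x₁ hx₁ x₂ hx₂ heq
      simp only at heq
      have hx₂eq : x₂ = φ (t * τ x₁ - t * τ x₂) x₁ := by
        have h := congrArg (φ (-(t * τ x₂))) heq
        rw [hcancel, hflow] at h
        rw [show t * τ x₁ - t * τ x₂ = -(t * τ x₂) + t * τ x₁ by ring]
        exact h.symm
      have hr : |t * τ x₁ - t * τ x₂| ≤ 3*η := by
        have h₁ := hbb x₁ hx₁; have h₂ := hbb x₂ hx₂
        calc |t * τ x₁ - t * τ x₂| ≤ |t * τ x₁| + |t * τ x₂| := abs_sub _ _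
        _ ≤ 3*η := by linarith
      have hr0 := huniqS x₁ hx₁ _ hr (by rw [← hx₂eq]; exact hx₂)
      rw [hr0, hφ0] at hx₂eq
      exact hx₂eq.symm
    · intro xb hxb
      refine ⟨η, hη, Set.univ, isOpen_univ, trivial, ?_⟩
      rintro yb ⟨-, ⟨x₁, hx₁, rfl⟩⟩ s hs ⟨-, ⟨x₂, hx₂, heq2⟩⟩
      simp only at heq2
      have hx₂eq : x₂ = φ (s + t * τ x₁ - t * τ x₂) x₁ := by
        have h := congrArg (φ (-(t * τ x₂))) heq2
        rw [hcancel, hflow, hflow] at h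
        rw [show s + t * τ x₁ - t * τ x₂ = -(t * τ x₂) + s + t * τ x₁ by ring]
        exact h
      have hsb : |s| ≤ η := abs_le.2 ⟨hs.1, hs.2⟩
      have hr : |s + t * τ x₁ - t * τ x₂| ≤ 3*η := by
        have h₁ := hbb x₁ hx₁; have h₂ := hbb x₂ hx₂
        calc |s + t * τ x₁ - t * τ x₂| ≤ |s + t * τ x₁| + |t * τ x₂| := abs_sub _ _
        _ ≤ |s| + |t * τ x₁| + |t * τ x₂| := by linarith [abs_add_le s (t * τ x₁)]
        _ ≤ 3*η := by linarith
      have hr0 := huniqS x₁ hx₁ _ hr (by rw [← hx₂eq]; exact hx₂)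
      have hx12 : x₂ = x₁ := by rw [hr0, hφ0] at hx₂eq; exact hx₂eq
      rw [hx12] at hr0
      linarith [hr0]
  · apply Set.Subset.antisymm
    · rintro _ ⟨x, hx, rfl⟩
      simp only [one_mul]
      exact (hτ1 x hx).2
    · intro x' hx'
      obtain ⟨x₀, hx₀S, hd⟩ := h2 x' hx'
      obtain ⟨z, hz, hznear⟩ := P.hnear η hη hηa x' x₀ hx₀S hd
      obtain ⟨s, hsb, hFs⟩ := P.cross η hη hηa z hznear
      have hφsS : φ s x' ∈ S := by
        rw [← hz]
        exact (hmemP z s).2 ⟨0, by rw [hFs]; norm_num⟩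
      have hback : φ (-s) (φ s x') = x' := hcancel s x'
      have hτval : -s = τ (φ s x') :=
        hτu (φ s x') hφsS (-s) (by rwa [abs_neg]) (by rw [hback]; exact hx')
      exact ⟨φ s x', hφsS, by simp only [one_mul, ← hτval, hback]⟩

end Iso

/-- **At most countably many cross-sections up to isotopy.**
Let `M` be a compact metric space with a continuous flow `φ`, and let `f₀ : M → ℝ/ℤ` be
continuous and not homotopic to a constant. Then there is a countable (possibly empty)
family of level-set cross-sections for `f₀` such that every level-set cross-section for
`f₀` is isotopic along the flow to a member of the family. -/
theorem crossSections_upto_isotopy_countable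
    {M : Type*} [MetricSpace M] [CompactSpace M]
    (f₀ : M → AddCircle (1:ℝ)) (hf₀ : Continuous f₀)
    (hnc : ¬ ∃ c : AddCircle (1:ℝ),
      ContinuousMap.Homotopic ⟨f₀, hf₀⟩ (ContinuousMap.const M c))
    (φ : ℝ → M → M)
    (hφc : Continuous fun p : ℝ × M => φ p.1 p.2)
    (hφ0 : ∀ x : M, φ 0 x = x)
    (hφadd : ∀ (s t : ℝ) (x : M), φ (s + t) x = φ s (φ t x))
    (ψ : ℝ → ZCover f₀ → ZCover f₀)
    (hψc : Continuous fun p : ℝ × ZCover f₀ => ψ p.1 p.2)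
    (hψ0 : ∀ y : ZCover f₀, ψ 0 y = y)
    (hψadd : ∀ (s t : ℝ) (y : ZCover f₀), ψ (s + t) y = ψ s (ψ t y))
    (hlift : ∀ (s : ℝ) (y : ZCover f₀), zProj f₀ (ψ s y) = φ s (zProj f₀ y))
    (hdeck : ∀ (s : ℝ) (y : ZCover f₀), ψ s (zDeck f₀ y) = zDeck f₀ (ψ s y))
    :
    ∃ 𝒞 : Set (Set M), 𝒞.Countable ∧ (∀ S ∈ 𝒞, IsLevelSetCS f₀ ψ S) ∧
      ∀ S : Set M, IsLevelSetCS f₀ ψ S → ∃ S' ∈ 𝒞, IsotopicAlongFlow φ S S' := by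
  classical
  have pd : ∀ S : Set M, IsLevelSetCS f₀ ψ S → CSData f₀ ψ S := fun S h =>
    (exists_csdata hf₀ hψc hψ0 h).some
  -- finite nets at every scale
  have hnet : ∀ n : ℕ, ∃ A : Finset M, ∀ x : M, ∃ p ∈ A, dist x p < 1/((n:ℝ)+1)/2 := by
    intro n
    obtain ⟨t, -, htfin, hcov⟩ := finite_cover_balls_of_compact (isCompact_univ (X := M))
      (e := 1/((n:ℝ)+1)/2) (by positivity)
    refine ⟨htfin.toFinset, ?_⟩
    intro x
    obtain ⟨p, hp, hxp⟩ := Set.mem_iUnion₂.1 (hcov (Set.mem_univ x))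
    exact ⟨p, htfin.mem_toFinset.2 hp, Metric.mem_ball.1 hxp⟩
  choose A hA using hnet
  -- codes
  let code : ℕ → Set M → Finset M := fun n S =>
    (A n).filter (fun p => ∃ x ∈ S, dist p x < 1/((n:ℝ)+1)/2)
  have hcode : ∀ (n : ℕ) (S S' : Set M), code n S = code n S' →
      ∀ x ∈ S, ∃ x' ∈ S', dist x x' < 1/((n:ℝ)+1) := by
    intro n S S' hcc x hx
    obtain ⟨p, hpA, hxp⟩ := hA n x
    have hpcode : p ∈ code n S := by
      simp only [code, Finset.mem_filter]
      exact ⟨hpA, x, hx, by rwa [dist_comm]⟩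
    rw [hcc] at hpcode
    simp only [code, Finset.mem_filter] at hpcode
    obtain ⟨-, x', hx', hpx'⟩ := hpcode
    refine ⟨x', hx', ?_⟩
    calc dist x x' ≤ dist x p + dist p x' := dist_triangle _ _ _
    _ < 1/((n:ℝ)+1)/2 + 1/((n:ℝ)+1)/2 := add_lt_add hxp hpx'
    _ = 1/((n:ℝ)+1) := by ring
  -- the classes
  let Cnm : ℕ → ℕ → Set (Set M) := fun n m =>
    {S | ∃ h : IsLevelSetCS f₀ ψ S, 1/((m:ℝ)+1) ≤ (pd S h).a ∧
      1/((n:ℝ)+1) ≤ (pd S h).eps (1/((m:ℝ)+1))}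
  -- representatives
  let pick : ℕ → ℕ → Finset M → Set (Set M) := fun n m γ =>
    if h : ∃ S, S ∈ Cnm n m ∧ code n S = γ then {h.choose} else ∅
  refine ⟨⋃ (n : ℕ), ⋃ (m : ℕ), ⋃ γ ∈ (((A n).powerset : Finset (Finset M)) : Set (Finset M)),
    pick n m γ, ?_, ?_, ?_⟩
  · apply Set.countable_iUnion
    intro n
    apply Set.countable_iUnion
    intro m
    apply Set.Countable.biUnion ((A n).powerset.finite_toSet.countable)
    intro γ _
    dsimp only [pick]
    split
    · exact Set.countable_singleton _
    · exact Set.countable_empty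
  · intro S hS
    simp only [Set.mem_iUnion] at hS
    obtain ⟨n, m, γ, -, hSp⟩ := hS
    dsimp only [pick] at hSp
    split at hSp
    · next h =>
      rw [Set.mem_singleton_iff] at hSp
      subst hSp
      obtain ⟨hC, -⟩ := h.choose_spec
      simp only [Cnm, Set.mem_setOf_eq] at hC
      exact hC.choose
    · exact absurd hSp (Set.notMem_empty _)
  · intro S hS
    set P := pd S hS with hP
    obtain ⟨m, hm⟩ := exists_nat_one_div_lt P.ha
    have hmpos : (0:ℝ) < 1/((m:ℝ)+1) := by positivity
    have hma : 1/((m:ℝ)+1) ≤ P.a := hm.le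
    have hepspos : 0 < P.eps (1/((m:ℝ)+1)) := P.heps _ hmpos hma
    obtain ⟨n, hn⟩ := exists_nat_one_div_lt hepspos
    have hSmem : S ∈ Cnm n m := ⟨hS, hma, hn.le⟩
    have hpickne : ∃ T, T ∈ Cnm n m ∧ code n T = code n S := ⟨S, hSmem, rfl⟩
    set T := hpickne.choose with hT
    obtain ⟨hTmem, hTcode⟩ := hpickne.choose_spec
    obtain ⟨hT', hTa, hTeps⟩ := hTmem
    refine ⟨T, ?_, ?_⟩
    · simp only [Set.mem_iUnion]
      refine ⟨n, m, code n S, ?_, ?_⟩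
      · simp only [Finset.coe_powerset, Set.mem_preimage, Set.mem_powerset_iff,
          Finset.coe_subset]
        exact Finset.filter_subset _ _
      · dsimp only [pick]
        rw [dif_pos hpickne]
        rfl
    · apply iso_of_close hφc hφ0 hφadd hψ0 hlift P (pd T hT') (1/((m:ℝ)+1)) hmpos hma hTa
      · -- h1 : points of S are close to T
        intro x hx
        obtain ⟨x', hx', hd⟩ := hcode n S T hTcode.symm x hx
        exact ⟨x', hx', lt_of_lt_of_le hd hTeps⟩
      · -- h2 : points of T are close to S
        intro x' hx'
        obtain ⟨x, hx, hd⟩ := hcode n T S hTcode x' hx'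
        exact ⟨x, hx, lt_of_lt_of_le hd hn.le⟩
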